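/- Let k ≠ 0 be a real number, t > 0, and u0 ≥ 0. Define g : [0, t] → ℝ by g(s) := 2k·u0·e^{k s} / (e^{2kt} − 1). If u : [0, t] → ℝ is differentiable with u(0) = u0 and u′(s) ≤ −k·u(s) − g(s) for all s ∈ [0, t], then u(s) ≤ u0 · (e^{2kt − ks} − e^{ks}) / (e^{2kt} − 1) for all s ∈ [0, t]; in particular u(t) ≤ 0. -/

import Mathlib

open Real Set

/-- ODE comparison (inequality (CD3)) used in the proof of the Harnack inequality
(Lemma 2.3): with `g(s) = 2 k u0 e^{k s} / (e^{2kt} - 1)`, any differentiable `u`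
with `u(0) = u0` and `u' ≤ -k u - g` on `[0,t]` satisfies
`u(s) ≤ u0 (e^{2kt - ks} - e^{ks}) / (e^{2kt} - 1)`; in particular `u(t) ≤ 0`. -/
theorem coupling_ode_comparison
    (k t u0 : ℝ) (hk : k ≠ 0) (ht : 0 < t) (hu0 : 0 ≤ u0)
    (u u' : ℝ → ℝ)
    (hderiv : ∀ s ∈ Set.Icc (0 : ℝ) t, HasDerivAt u (u' s) s)
    (h0 : u 0 = u0)
    (hineq : ∀ s ∈ Set.Icc (0 : ℝ) t,
      u' s ≤ -k * u s - 2 * k * u0 * Real.exp (k * s) / (Real.exp (2 * k * t) - 1)) :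
    (∀ s ∈ Set.Icc (0 : ℝ) t,
      u s ≤ u0 * (Real.exp (2 * k * t - k * s) - Real.exp (k * s)) /
        (Real.exp (2 * k * t) - 1)) ∧ u t ≤ 0 := by
  have hD : Real.exp (2 * k * t) - 1 ≠ 0 := by
    have h2kt : 2 * k * t ≠ 0 := mul_ne_zero (mul_ne_zero two_ne_zero hk) ht.ne'
    refine sub_ne_zero_of_ne (fun h => h2kt ?_)
    exact Real.exp_injective (h.trans Real.exp_zero.symm)
  set c : ℝ := u0 / (Real.exp (2 * k * t) - 1) with hc
  set F : ℝ → ℝ := fun s => u s * Real.exp (k * s) -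
      c * (Real.exp (2 * k * t) - Real.exp (2 * k * s)) with hFdef
  have hF : ∀ s ∈ Set.Icc (0 : ℝ) t, HasDerivAt F
      (u' s * Real.exp (k * s) + u s * (Real.exp (k * s) * k)
        + c * (Real.exp (2 * k * s) * (2 * k))) s := by
    intro s hs
    have h1 : HasDerivAt (fun x : ℝ => Real.exp (k * x)) (Real.exp (k * s) * k) s := by
      simpa using ((hasDerivAt_id s).const_mul k).exp
    have h2 : HasDerivAt (fun x : ℝ => Real.exp (2 * k * x))
        (Real.exp (2 * k * s) * (2 * k)) s := by
      simpa using ((hasDerivAt_id s).const_mul (2 * k)).exp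
    have h3 : HasDerivAt (fun x : ℝ => Real.exp (2 * k * t) - Real.exp (2 * k * x))
        (-(Real.exp (2 * k * s) * (2 * k))) s := by
      have h := (hasDerivAt_const s (Real.exp (2 * k * t))).sub h2
      rw [zero_sub] at h
      exact h
    have := ((hderiv s hs).mul h1).sub (h3.const_mul c)
    exact this.congr_deriv (by ring)
  have hF0 : F 0 = 0 := by
    simp only [hFdef, mul_zero, Real.exp_zero, mul_one, h0]
    rw [hc, div_mul_cancel₀ _ hD, sub_self]
  have hmono : AntitoneOn F (Set.Icc (0 : ℝ) t) := by
    apply antitoneOn_of_deriv_nonpos (convex_Icc 0 t)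
    · intro s hs
      exact (hF s hs).continuousAt.continuousWithinAt
    · intro s hs
      rw [interior_Icc] at hs
      exact (hF s (Ioo_subset_Icc_self hs)).differentiableAt.differentiableWithinAt
    · intro s hs
      rw [interior_Icc] at hs
      have hs' := Ioo_subset_Icc_self hs
      rw [(hF s hs').deriv]
      have hineq' := hineq s hs'
      have hcg : 2 * k * u0 * Real.exp (k * s) / (Real.exp (2 * k * t) - 1)
          = 2 * k * c * Real.exp (k * s) := by rw [hc]; ring
      rw [hcg] at hineq'
      have hexp : Real.exp (k * s) * Real.exp (k * s) = Real.exp (2 * k * s) := by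
        rw [← Real.exp_add]; ring_nf
      have hkey := mul_le_mul_of_nonneg_right hineq' (Real.exp_pos (k * s)).le
      rw [sub_mul, mul_assoc (2 * k * c), hexp] at hkey
      nlinarith [hkey]
  have main : ∀ s ∈ Set.Icc (0 : ℝ) t,
      u s ≤ u0 * (Real.exp (2 * k * t - k * s) - Real.exp (k * s)) /
        (Real.exp (2 * k * t) - 1) := by
    intro s hs
    have hFs : F s ≤ 0 := by
      have := hmono (Set.mem_Icc.mpr ⟨le_refl 0, ht.le⟩) hs hs.1
      rw [hF0] at this
      exact this
    have hFs' : u s * Real.exp (k * s)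
        - c * (Real.exp (2 * k * t) - Real.exp (2 * k * s)) ≤ 0 := hFs
    have hgoal : u0 * (Real.exp (2 * k * t - k * s) - Real.exp (k * s)) /
        (Real.exp (2 * k * t) - 1)
        = c * (Real.exp (2 * k * t - k * s) - Real.exp (k * s)) := by rw [hc]; ring
    rw [hgoal, ← mul_le_mul_iff_of_pos_right (Real.exp_pos (k * s))]
    have h1 : Real.exp (2 * k * t - k * s) * Real.exp (k * s) = Real.exp (2 * k * t) := by
      rw [← Real.exp_add]; ring_nf
    have h2 : Real.exp (k * s) * Real.exp (k * s) = Real.exp (2 * k * s) := by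
      rw [← Real.exp_add]; ring_nf
    have heq : c * (Real.exp (2 * k * t - k * s) - Real.exp (k * s)) * Real.exp (k * s)
        = c * (Real.exp (2 * k * t) - Real.exp (2 * k * s)) := by
      linear_combination c * h1 - c * h2
    rw [heq]
    linarith
  refine ⟨main, ?_⟩
  have := main t (Set.mem_Icc.mpr ⟨ht.le, le_refl t⟩)
  have ht' : 2 * k * t - k * t = k * t := by ring
  rw [ht', sub_self, mul_zero, zero_div] at this
  exact this
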